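/- Let L be a topological group, M an open subgroup of L, G a dense subgroup of L, H = G ∩ M, and σ : M → ℂ a continuous group homomorphism with |σ(m)| = 1 for all m ∈ M. Define B = {x ∈ G | σ(h) = σ(x⁻¹hx) for all h ∈ H ∩ xHx⁻¹} and B_L = {x ∈ L | σ(h) = σ(x⁻¹hx) for all h ∈ M ∩ xMx⁻¹}. Then B_L is open and closed in L, B_L ∩ G = B, and the closure of B in L equals B_L. -/

import Mathlib

open Pointwise


/-- Let `L` be a topological group, `M` an open subgroup, `G` a dense
subgroup, `H = G ⊓ M`, and `σ : M → ℂ` a continuous unimodular character.  With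
`B = {x ∈ G | σ(h) = σ(x⁻¹ h x) for all h ∈ H ∩ x H x⁻¹}` and
`B_L = {x ∈ L | σ(h) = σ(x⁻¹ h x) for all h ∈ M ∩ x M x⁻¹}`, the set `B_L` is open and
closed, `B_L ∩ G = B`, and the closure of `B` equals `B_L`. -/
theorem stmt_8 {L : Type*} [Group L] [TopologicalSpace L] [IsTopologicalGroup L]
    (M G : Subgroup L) (hMo : IsOpen (M : Set L)) (hG : Dense (G : Set L))
    (σ : M →* ℂ) (hσc : Continuous σ) (hσu : ∀ m : M, ‖σ m‖ = 1)
    (B BL : Set L)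
    (hB : B = {x : L | x ∈ G ∧ ∀ (h : L) (h1 : h ∈ G ⊓ M) (h2 : x⁻¹ * h * x ∈ G ⊓ M),
      σ ⟨h, (Subgroup.mem_inf.mp h1).2⟩ = σ ⟨x⁻¹ * h * x, (Subgroup.mem_inf.mp h2).2⟩})
    (hBL : BL = {x : L | ∀ (h : L) (h1 : h ∈ M) (h2 : x⁻¹ * h * x ∈ M),
      σ ⟨h, h1⟩ = σ ⟨x⁻¹ * h * x, h2⟩}) :
    IsOpen BL ∧ IsClosed BL ∧ BL ∩ (G : Set L) = B ∧ closure B = BL := by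
  classical
  have σne : ∀ m : M, σ m ≠ 0 := by
    intro m hm
    have := hσu m
    rw [hm] at this
    simp at this
  -- Key lemma: BL is stable under right multiplication by elements of M
  have key : ∀ x u : L, u ∈ M → x ∈ BL → x * u ∈ BL := by
    intro x u hu hx
    rw [hBL] at hx ⊢
    intro h h1 h2
    have heq : x⁻¹ * h * x = u * ((x * u)⁻¹ * h * (x * u)) * u⁻¹ := by group
    have h2' : x⁻¹ * h * x ∈ M := by
      rw [heq]; exact M.mul_mem (M.mul_mem hu h2) (M.inv_mem hu)
    rw [hx h h1 h2']
    have hcancel : σ ⟨x⁻¹ * h * x, h2'⟩ * σ ⟨u, hu⟩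
        = σ ⟨(x * u)⁻¹ * h * (x * u), h2⟩ * σ ⟨u, hu⟩ := by
      rw [← map_mul, ← map_mul]
      have e : (⟨x⁻¹ * h * x, h2'⟩ * ⟨u, hu⟩ : M)
          = ⟨u, hu⟩ * ⟨(x * u)⁻¹ * h * (x * u), h2⟩ := by
        ext; simp only [Subgroup.coe_mul]; group
      rw [e, map_mul, map_mul, mul_comm]
    exact mul_right_cancel₀ (σne ⟨u, hu⟩) hcancel
  have hmemcoset : ∀ x : L, x ∈ x • (M : Set L) :=
    fun x => ⟨1, M.one_mem, by simp⟩
  have hBLopen : IsOpen BL := by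
    rw [isOpen_iff_mem_nhds]
    intro x hx
    filter_upwards [(hMo.smul x).mem_nhds (hmemcoset x)] with y hy
    obtain ⟨u, hu, rfl⟩ := hy
    exact key x u hu hx
  have hBLclosed : IsClosed BL := by
    rw [← isOpen_compl_iff, isOpen_iff_mem_nhds]
    intro x hx
    filter_upwards [(hMo.smul x).mem_nhds (hmemcoset x)] with y hy hyBL
    obtain ⟨u, hu, rfl⟩ := hy
    exact hx (by simpa using key (x • u) u⁻¹ (M.inv_mem hu) hyBL)
  -- the extension of σ by zero
  set F : L → ℂ := fun y => if hy : y ∈ M then σ ⟨y, hy⟩ else 0 with hFdef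
  have hF : ∀ (y : L) (hy : y ∈ M), F y = σ ⟨y, hy⟩ := fun y hy => dif_pos hy
  have hFc : ContinuousOn F (M : Set L) := by
    rw [continuousOn_iff_continuous_restrict]
    have : Set.domRestrict (M : Set L) F = fun m : M => σ m := by
      funext m; exact dif_pos m.2
    rw [this]; exact hσc
  have hFca : ∀ y ∈ M, ContinuousAt F y := fun y hy =>
    hFc.continuousAt (hMo.mem_nhds hy)
  have h3 : BL ∩ (G : Set L) = B := by
    ext x
    constructor
    · rintro ⟨hxBL, hxG⟩
      rw [hBL] at hxBL
      rw [hB]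
      exact ⟨hxG, fun h h1 h2 =>
        hxBL h (Subgroup.mem_inf.mp h1).2 (Subgroup.mem_inf.mp h2).2⟩
    · intro hxB
      rw [hB] at hxB
      obtain ⟨hxG, hx⟩ := hxB
      refine ⟨?_, hxG⟩
      rw [hBL]
      intro h h1 h2
      have hconj : Continuous fun y : L => x⁻¹ * y * x :=
        (continuous_mul_left x⁻¹).mul continuous_const
      set U : Set L := (M : Set L) ∩ (fun y : L => x⁻¹ * y * x) ⁻¹' (M : Set L)
        with hUdef
      have hUo : IsOpen U := hMo.inter (hMo.preimage hconj)
      have hhU : h ∈ U := ⟨h1, h2⟩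
      have hdense : h ∈ closure (U ∩ (G : Set L)) :=
        hG.open_subset_closure_inter hUo hhU
      have hNB : (nhdsWithin h (U ∩ (G : Set L))).NeBot :=
        mem_closure_iff_nhdsWithin_neBot.mp hdense
      have t1 : Filter.Tendsto F (nhdsWithin h (U ∩ (G : Set L))) (nhds (F h)) :=
        ((hFca h h1).tendsto).mono_left nhdsWithin_le_nhds
      have t2 : Filter.Tendsto (fun y => F (x⁻¹ * y * x))
          (nhdsWithin h (U ∩ (G : Set L))) (nhds (F (x⁻¹ * h * x))) :=
        ((hFca _ h2).tendsto.comp (hconj.tendsto h)).mono_left nhdsWithin_le_nhds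
      have hagree : ∀ g ∈ U ∩ (G : Set L), F g = F (x⁻¹ * g * x) := by
        rintro g ⟨⟨hgM, hgM'⟩, hgG⟩
        have hgG' : x⁻¹ * g * x ∈ G := G.mul_mem (G.mul_mem (G.inv_mem hxG) hgG) hxG
        rw [hF g hgM, hF _ hgM']
        exact hx g (Subgroup.mem_inf.mpr ⟨hgG, hgM⟩)
          (Subgroup.mem_inf.mpr ⟨hgG', hgM'⟩)
      have hEq : F =ᶠ[nhdsWithin h (U ∩ (G : Set L))] fun y => F (x⁻¹ * y * x) :=
        Filter.eventuallyEq_of_mem self_mem_nhdsWithin hagree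
      have := tendsto_nhds_unique (t1.congr' hEq) t2
      rw [hF h h1, hF _ h2] at this
      exact this
  refine ⟨hBLopen, hBLclosed, h3, subset_antisymm ?_ ?_⟩
  · exact closure_minimal (by rw [← h3]; exact Set.inter_subset_left) hBLclosed
  · intro x hx
    have := hG.open_subset_closure_inter hBLopen hx
    rwa [h3] at this
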